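/- For every n ≥ 2 and every m ≥ 1: f₂(n,m) = m if m ≤ n/2; f₂(n,m) = n − m if n/2 < m < n − 1; and f₂(n,m) = 1 if m ≥ n − 1. -/

import Mathlib

open Finset

/-- The union of the first `k` sets in the ordering `π` (positions `1,…,k`,
i.e. 0-based indices `< k`). -/
def unionUpTo {α : Type*} [DecidableEq α] {m : ℕ} (X : Fin m → Finset α)
    (π : Equiv.Perm (Fin m)) (k : ℕ) : Finset α :=
  (Finset.univ.filter (fun i : Fin m => (i : ℕ) < k)).biUnion (fun i => X (π i))

/-- `Δ(𝒳,π,k) = |X_{π(1)} ∪ ⋯ ∪ X_{π(k)}| − k`. -/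
def delta {α : Type*} [DecidableEq α] {m : ℕ} (X : Fin m → Finset α)
    (π : Equiv.Perm (Fin m)) (k : ℕ) : ℤ :=
  ((unionUpTo X π k).card : ℤ) - k

/-- `Δ(𝒳,π) = max_{1 ≤ k ≤ m} Δ(𝒳,π,k)`. -/
noncomputable def DeltaPerm {α : Type*} [DecidableEq α] {m : ℕ} (X : Fin m → Finset α)
    (π : Equiv.Perm (Fin m)) : ℤ :=
  sSup {d : ℤ | ∃ k : ℕ, 1 ≤ k ∧ k ≤ m ∧ d = delta X π k}

/-- `Δ(𝒳) = min_π Δ(𝒳,π)`. -/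
noncomputable def DeltaMin {α : Type*} [DecidableEq α] {m : ℕ} (X : Fin m → Finset α) : ℤ :=
  sInf {d : ℤ | ∃ π : Equiv.Perm (Fin m), d = DeltaPerm X π}

/-- `f_c(n,m) = max_{𝒳 ∈ S(n,m,c)} Δ(𝒳)`, families of `m` subsets of an
`n`-element ground set, each of size at most `c`. -/
noncomputable def fFam (n m c : ℕ) : ℤ :=
  sSup {d : ℤ | ∃ X : Fin m → Finset (Fin n), (∀ i, (X i).card ≤ c) ∧ d = DeltaMin X}

/-! ### Auxiliary lemmas -/

section Aux

variable {α : Type*} [DecidableEq α] {m : ℕ}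

lemma unionUpTo_subset (X : Fin m → Finset α) (π : Equiv.Perm (Fin m)) (k : ℕ) :
    unionUpTo X π k ⊆ univ.biUnion X := by
  intro a ha
  simp only [unionUpTo, mem_biUnion, mem_filter] at ha ⊢
  obtain ⟨i, _, hi⟩ := ha
  exact ⟨π i, mem_univ _, hi⟩

lemma unionUpTo_of_le (X : Fin m → Finset α) (π : Equiv.Perm (Fin m)) {k : ℕ} (h : m ≤ k) :
    unionUpTo X π k = univ.biUnion X := by
  apply subset_antisymm (unionUpTo_subset X π k)
  intro a ha
  simp only [mem_biUnion, mem_univ, true_and] at ha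
  obtain ⟨i, hi⟩ := ha
  simp only [unionUpTo, mem_biUnion, mem_filter, mem_univ, true_and]
  exact ⟨π.symm i, lt_of_lt_of_le (π.symm i).isLt h, by simp [hi]⟩

lemma card_filter_lt {k : ℕ} (h : k ≤ m) :
    (univ.filter fun i : Fin m => (i : ℕ) < k).card = k := by
  have : (univ.filter fun i : Fin m => (i : ℕ) < k) =
      (Finset.range k).attachFin (fun x hx => lt_of_lt_of_le (mem_range.mp hx) h) := by
    ext i
    simp [Fin.ext_iff]
  rw [this, card_attachFin, card_range]

lemma card_unionUpTo_le {X : Fin m → Finset α} (h2 : ∀ i, (X i).card ≤ 2)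
    (π : Equiv.Perm (Fin m)) {k : ℕ} (h : k ≤ m) :
    (unionUpTo X π k).card ≤ 2 * k := by
  calc (unionUpTo X π k).card ≤ ∑ i ∈ univ.filter (fun i : Fin m => (i:ℕ) < k), (X (π i)).card :=
        card_biUnion_le
    _ ≤ ∑ _i ∈ univ.filter (fun i : Fin m => (i:ℕ) < k), 2 := sum_le_sum (fun i _ => h2 _)
    _ = 2 * k := by rw [sum_const, card_filter_lt h]; ring

/-- The permutation of `Fin (m+1)` which enumerates all indices except `j`
according to `σ` and puts `j` last. -/
def extendPerm {m : ℕ} (j : Fin (m+1)) (σ : Equiv.Perm (Fin m)) : Equiv.Perm (Fin (m+1)) :=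
  ((finSuccEquiv' (Fin.last m)).trans (Equiv.optionCongr σ)).trans (finSuccEquiv' j).symm

lemma extendPerm_castSucc {m : ℕ} (j : Fin (m+1)) (σ : Equiv.Perm (Fin m)) (i : Fin m) :
    extendPerm j σ i.castSucc = j.succAbove (σ i) := by
  simp [extendPerm, finSuccEquiv'_last_apply_castSucc, finSuccEquiv'_symm_some]

lemma unionUpTo_extendPerm (X : Fin (m+1) → Finset α) (j : Fin (m+1))
    (σ : Equiv.Perm (Fin m)) {k : ℕ} (hk : k ≤ m) :
    unionUpTo X (extendPerm j σ) k = unionUpTo (X ∘ j.succAbove) σ k := by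
  ext a
  simp only [unionUpTo, mem_biUnion, mem_filter, mem_univ, true_and, Function.comp]
  constructor
  · rintro ⟨i, hik, ha⟩
    have him : (i : ℕ) < m := lt_of_lt_of_le hik hk
    refine ⟨⟨i, him⟩, hik, ?_⟩
    have : i = Fin.castSucc ⟨i, him⟩ := by simp [Fin.ext_iff]
    rw [this, extendPerm_castSucc] at ha
    exact ha
  · rintro ⟨i, hik, ha⟩
    refine ⟨Fin.castSucc i, hik, ?_⟩
    rw [extendPerm_castSucc]
    exact ha

lemma biUnion_comp_succAbove (X : Fin (m+1) → Finset α) (j : Fin (m+1)) :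
    univ.biUnion (X ∘ j.succAbove) = (univ.erase j).biUnion X := by
  ext a
  simp only [mem_biUnion, mem_univ, true_and, mem_erase, Function.comp]
  constructor
  · rintro ⟨i, ha⟩
    exact ⟨j.succAbove i, ⟨Fin.succAbove_ne j i, trivial⟩, ha⟩
  · rintro ⟨i, ⟨hij, -⟩, ha⟩
    obtain ⟨i', rfl⟩ := Fin.exists_succAbove_eq hij
    exact ⟨i', ha⟩

lemma double_count (X : Fin m → Finset α)
    (h : ∀ x ∈ univ.biUnion X, 2 ≤ (univ.filter fun i => x ∈ X i).card)
    (h2 : ∀ i, (X i).card ≤ 2) :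
    (univ.biUnion X).card ≤ m := by
  set U := univ.biUnion X with hU
  have key : ∑ x ∈ U, (univ.filter fun i => x ∈ X i).card = ∑ i : Fin m, (X i).card := by
    simp only [card_filter]
    rw [Finset.sum_comm]
    congr 1
    ext i
    rw [← card_filter, filter_mem_eq_inter, inter_eq_right.mpr]
    intro x hx
    exact mem_biUnion.mpr ⟨i, mem_univ _, hx⟩
  have h1 : 2 * U.card ≤ ∑ x ∈ U, (univ.filter fun i => x ∈ X i).card := by
    rw [two_mul]
    calc U.card + U.card = ∑ _x ∈ U, 2 := by rw [sum_const]; ring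
    _ ≤ _ := sum_le_sum h
  have h3 : ∑ i : Fin m, (X i).card ≤ 2 * m := by
    calc ∑ i : Fin m, (X i).card ≤ ∑ _i : Fin m, 2 := sum_le_sum (fun i _ => h2 i)
    _ = 2 * m := by simp [mul_comm]
  omega

/-- Key combinatorial lemma: any family of sets of size at most 2 admits an
ordering whose prefix unions satisfy `|U_k| ≤ k + max(1, |U| − m)`. -/
lemma key_order : ∀ (m : ℕ) (X : Fin m → Finset α), (∀ i, (X i).card ≤ 2) →
    ∃ π : Equiv.Perm (Fin m), ∀ k, 1 ≤ k → k ≤ m →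
      ((unionUpTo X π k).card : ℤ) ≤ k + max 1 (((univ.biUnion X).card : ℤ) - m) := by
  intro m
  induction m with
  | zero => exact fun X _ => ⟨1, fun k h1 h2 => by omega⟩
  | succ m IH =>
    intro X h2
    have last_step : ∀ π : Equiv.Perm (Fin (m+1)),
        ((unionUpTo X π (m+1)).card : ℤ) ≤ (m+1 : ℕ) +
          max 1 (((univ.biUnion X).card : ℤ) - (m+1)) := by
      intro π
      rw [unionUpTo_of_le X π (le_refl (m+1))]
      have := le_max_right (1 : ℤ) (((univ.biUnion X).card : ℤ) - (m+1))
      push_cast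
      linarith
    by_cases hall : ∀ j : Fin (m+1), X j ⊆ (univ.erase j).biUnion X
    · -- every set is covered by the rest: total union has at most m+1 elements
      have hcount : ∀ x ∈ univ.biUnion X, 2 ≤ (univ.filter fun i => x ∈ X i).card := by
        intro x hx
        obtain ⟨j, -, hj⟩ := mem_biUnion.mp hx
        obtain ⟨i, hi, hxi⟩ := mem_biUnion.mp (hall j hj)
        exact Finset.one_lt_card.mpr ⟨i, mem_filter.mpr ⟨mem_univ _, hxi⟩, j,
          mem_filter.mpr ⟨mem_univ _, hj⟩, (mem_erase.mp hi).1⟩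
      have hUle : (univ.biUnion X).card ≤ m + 1 := double_count X hcount h2
      obtain ⟨σ, hσ⟩ := IH (X ∘ (Fin.last m).succAbove) (fun i => h2 _)
      refine ⟨extendPerm (Fin.last m) σ, fun k hk1 hk2 => ?_⟩
      rcases Nat.lt_or_ge k (m+1) with hk | hk
      · have hkm : k ≤ m := by omega
        rw [unionUpTo_extendPerm X _ σ hkm]
        have hb := hσ k hk1 hkm
        have hsub : univ.biUnion (X ∘ (Fin.last m).succAbove) ⊆ univ.biUnion X := by
          rw [biUnion_comp_succAbove]
          exact biUnion_subset_biUnion_of_subset_left X (erase_subset _ _)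
        have hc : ((univ.biUnion (X ∘ (Fin.last m).succAbove)).card : ℤ) ≤ m + 1 := by
          have := card_le_card hsub
          omega
        have hmax : max 1 (((univ.biUnion (X ∘ (Fin.last m).succAbove)).card : ℤ) - m) = 1 := by
          apply max_eq_left; linarith
        have hmax2 : (1:ℤ) ≤ max 1 (((univ.biUnion X).card : ℤ) - (m+1)) := le_max_left _ _
        rw [hmax] at hb
        push_cast
        linarith
      · have : k = m + 1 := by omega
        subst this
        exact last_step _
    · push_neg at hall
      obtain ⟨j, hj⟩ := hall
      obtain ⟨x, hxj, hxn⟩ := not_subset.mp hj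
      obtain ⟨σ, hσ⟩ := IH (X ∘ j.succAbove) (fun i => h2 _)
      refine ⟨extendPerm j σ, fun k hk1 hk2 => ?_⟩
      rcases Nat.lt_or_ge k (m+1) with hk | hk
      · have hkm : k ≤ m := by omega
        rw [unionUpTo_extendPerm X j σ hkm]
        have hb := hσ k hk1 hkm
        have hcard : ((univ.biUnion (X ∘ j.succAbove)).card : ℤ) ≤
            ((univ.biUnion X).card : ℤ) - 1 := by
          rw [biUnion_comp_succAbove]
          have hsub : (univ.erase j).biUnion X ⊆ (univ.biUnion X).erase x := by
            intro a ha
            obtain ⟨i, hi, hai⟩ := mem_biUnion.mp ha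
            refine mem_erase.mpr ⟨?_, mem_biUnion.mpr ⟨i, mem_univ _, hai⟩⟩
            rintro rfl
            exact hxn (mem_biUnion.mpr ⟨i, hi, hai⟩)
          have h1 := card_le_card hsub
          have h2' : x ∈ univ.biUnion X := mem_biUnion.mpr ⟨j, mem_univ _, hxj⟩
          rw [card_erase_of_mem h2'] at h1
          have : 1 ≤ (univ.biUnion X).card := card_pos.mpr ⟨x, h2'⟩
          omega
        have hmono : max 1 (((univ.biUnion (X ∘ j.succAbove)).card : ℤ) - m) ≤
            max 1 (((univ.biUnion X).card : ℤ) - (m+1)) := by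
          apply max_le (le_max_left _ _)
          apply le_max_of_le_right
          linarith
        push_cast
        linarith
      · have : k = m + 1 := by omega
        subst this
        exact last_step _

end Aux

section Plumbing

variable {n m : ℕ}

lemma delta_le_n (X : Fin m → Finset (Fin n)) (π : Equiv.Perm (Fin m)) (k : ℕ) :
    delta X π k ≤ n := by
  have h := card_le_univ (unionUpTo X π k)
  simp only [card_univ, Fintype.card_fin] at h
  simp only [delta]
  have h0 : (0:ℤ) ≤ k := Int.ofNat_nonneg k
  have h1 : ((unionUpTo X π k).card : ℤ) ≤ n := by exact_mod_cast h
  linarith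

lemma bddAbove_deltaSet (X : Fin m → Finset (Fin n)) (π : Equiv.Perm (Fin m)) :
    BddAbove {d : ℤ | ∃ k : ℕ, 1 ≤ k ∧ k ≤ m ∧ d = delta X π k} := by
  refine ⟨n, ?_⟩
  rintro d ⟨k, -, -, rfl⟩
  exact delta_le_n X π k

lemma delta_le_DeltaPerm (X : Fin m → Finset (Fin n)) (π : Equiv.Perm (Fin m))
    {k : ℕ} (hk1 : 1 ≤ k) (hk2 : k ≤ m) : delta X π k ≤ DeltaPerm X π :=
  le_csSup (bddAbove_deltaSet X π) ⟨k, hk1, hk2, rfl⟩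

lemma DeltaPerm_le (hm : 1 ≤ m) (X : Fin m → Finset (Fin n)) (π : Equiv.Perm (Fin m))
    {B : ℤ} (h : ∀ k, 1 ≤ k → k ≤ m → delta X π k ≤ B) : DeltaPerm X π ≤ B := by
  have hne : {d : ℤ | ∃ k : ℕ, 1 ≤ k ∧ k ≤ m ∧ d = delta X π k}.Nonempty :=
    ⟨delta X π 1, 1, le_refl 1, hm, rfl⟩
  apply csSup_le hne
  rintro d ⟨k, hk1, hk2, rfl⟩
  exact h k hk1 hk2

lemma neg_one_le_DeltaPerm (hm : 1 ≤ m) (X : Fin m → Finset (Fin n))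
    (π : Equiv.Perm (Fin m)) : -1 ≤ DeltaPerm X π := by
  refine le_trans ?_ (delta_le_DeltaPerm X π (le_refl 1) hm)
  simp only [delta]
  have : (0:ℤ) ≤ ((unionUpTo X π 1).card : ℤ) := Int.ofNat_nonneg _
  push_cast
  linarith

lemma DeltaMin_le (hm : 1 ≤ m) (X : Fin m → Finset (Fin n)) (π : Equiv.Perm (Fin m)) :
    DeltaMin X ≤ DeltaPerm X π := by
  have hbdd : BddBelow {d : ℤ | ∃ τ : Equiv.Perm (Fin m), d = DeltaPerm X τ} := by
    refine ⟨-1, ?_⟩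
    rintro d ⟨τ, rfl⟩
    exact neg_one_le_DeltaPerm hm X τ
  exact csInf_le hbdd ⟨π, rfl⟩

lemma le_DeltaMin (X : Fin m → Finset (Fin n)) {B : ℤ}
    (h : ∀ π : Equiv.Perm (Fin m), B ≤ DeltaPerm X π) : B ≤ DeltaMin X := by
  have hne : {d : ℤ | ∃ π : Equiv.Perm (Fin m), d = DeltaPerm X π}.Nonempty :=
    ⟨DeltaPerm X 1, 1, rfl⟩
  apply le_csInf hne
  rintro d ⟨π, rfl⟩
  exact h π

lemma fFam_eq {v : ℤ} (hmem : ∃ X : Fin m → Finset (Fin n),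
      (∀ i, (X i).card ≤ 2) ∧ v = DeltaMin X)
    (hub : ∀ X : Fin m → Finset (Fin n), (∀ i, (X i).card ≤ 2) → DeltaMin X ≤ v) :
    fFam n m 2 = v := by
  apply le_antisymm
  · apply csSup_le ⟨v, hmem⟩
    rintro d ⟨X, hX, rfl⟩
    exact hub X hX
  · apply le_csSup ⟨v, ?_⟩ hmem
    rintro d ⟨X, hX, rfl⟩
    exact hub X hX

/-- Uniform easy upper bound `Δ(𝒳) ≤ m`. -/
lemma DeltaMin_le_m (hm : 1 ≤ m) (X : Fin m → Finset (Fin n))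
    (h2 : ∀ i, (X i).card ≤ 2) : DeltaMin X ≤ m := by
  refine le_trans (DeltaMin_le hm X 1) (DeltaPerm_le hm X 1 ?_)
  intro k hk1 hk2
  have := card_unionUpTo_le h2 1 hk2
  simp only [delta]
  have h1 : ((unionUpTo X 1 k).card : ℤ) ≤ 2 * k := by exact_mod_cast this
  have h2' : (k:ℤ) ≤ m := by exact_mod_cast hk2
  linarith

/-- Uniform hard upper bound `Δ(𝒳) ≤ max(1, n − m)`. -/
lemma DeltaMin_le_max (hm : 1 ≤ m) (X : Fin m → Finset (Fin n))
    (h2 : ∀ i, (X i).card ≤ 2) : DeltaMin X ≤ max 1 ((n:ℤ) - m) := by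
  obtain ⟨π, hπ⟩ := key_order m X h2
  refine le_trans (DeltaMin_le hm X π) (DeltaPerm_le hm X π ?_)
  intro k hk1 hk2
  have hb := hπ k hk1 hk2
  have hU : ((univ.biUnion X).card : ℤ) ≤ n := by
    have := card_le_univ (univ.biUnion X)
    simp only [card_univ, Fintype.card_fin] at this
    exact_mod_cast this
  have hmono : max 1 (((univ.biUnion X).card : ℤ) - m) ≤ max 1 ((n:ℤ) - m) := by
    apply max_le (le_max_left _ _)
    apply le_max_of_le_right
    linarith
  simp only [delta]
  linarith

end Plumbing

/-- The value of `f₂(n,m)`: it equals `m` for `m ≤ n/2`, equals `n − m` for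
`n/2 < m < n − 1`, and equals `1` for `m ≥ n − 1`. -/
theorem f2_values (n m : ℕ) (hn : 2 ≤ n) (hm : 1 ≤ m) :
    (2 * m ≤ n → fFam n m 2 = m) ∧
    (n < 2 * m → m + 1 < n → fFam n m 2 = (n : ℤ) - m) ∧
    (n ≤ m + 1 → fFam n m 2 = 1) := by
  refine ⟨?_, ?_, ?_⟩
  · -- case 2m ≤ n : value m
    intro h
    apply fFam_eq
    · -- example: m disjoint pairs
      refine ⟨fun i => {⟨2*i.1, by have := i.isLt; omega⟩, ⟨2*i.1+1, by have := i.isLt; omega⟩},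
        ?_, ?_⟩
      · intro i
        exact le_trans (card_insert_le _ _) (by simp)
      · set X : Fin m → Finset (Fin n) :=
          fun i => {⟨2*i.1, by have := i.isLt; omega⟩, ⟨2*i.1+1, by have := i.isLt; omega⟩}
          with hX
        have hcardU : (univ.biUnion X).card = 2 * m := by
          rw [card_biUnion]
          · have hc : ∀ i : Fin m, (X i).card = 2 := by
              intro i
              rw [hX]
              rw [card_insert_of_notMem (by simp only [mem_singleton, Fin.ext_iff]; omega),
                card_singleton]
            rw [Finset.sum_congr rfl (fun i _ => hc i), sum_const]
            simp [mul_comm]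
          · intro a _ b _ hab
            rw [Function.onFun, Finset.disjoint_left]
            intro x hxa hxb
            simp only [hX, mem_insert, mem_singleton, Fin.ext_iff] at hxa hxb
            have : a.1 ≠ b.1 := fun hv => hab (Fin.ext hv)
            omega
        have hlow : (m:ℤ) ≤ DeltaMin X := by
          apply le_DeltaMin
          intro π
          refine le_trans ?_ (delta_le_DeltaPerm X π hm (le_refl m))
          simp only [delta, unionUpTo_of_le X π (le_refl m), hcardU]
          push_cast
          linarith
        have hhigh := DeltaMin_le_m hm X (fun i => le_trans (card_insert_le _ _) (by simp))
        omega
    · exact fun X h2 => DeltaMin_le_m hm X h2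
  · -- case n < 2m, m+1 < n : value n − m
    intro h1 h2
    set p := n - m with hp
    apply fFam_eq
    · -- example: p pairs and m − p singletons, covering everything
      have hpm : p ≤ m := by omega
      have h2p : 2 * p ≤ n := by omega
      refine ⟨fun i => if hi : i.1 < p
          then {⟨2*i.1, by omega⟩, ⟨2*i.1+1, by omega⟩}
          else {⟨p + i.1, by have := i.isLt; omega⟩}, ?_, ?_⟩
      · intro i
        by_cases hi : i.1 < p
        · simp only [dif_pos hi]
          exact le_trans (card_insert_le _ _) (by simp)
        · simp only [dif_neg hi, card_singleton]
          omega
      · set X : Fin m → Finset (Fin n) := fun i => if hi : i.1 < p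
          then {⟨2*i.1, by omega⟩, ⟨2*i.1+1, by omega⟩}
          else {⟨p + i.1, by have := i.isLt; omega⟩} with hX
        have hcov : univ.biUnion X = univ := by
          apply eq_univ_iff_forall.mpr
          intro x
          rcases Nat.lt_or_ge x.1 (2*p) with hx | hx
          · have hi : x.1 / 2 < p := by omega
            refine mem_biUnion.mpr ⟨⟨x.1 / 2, by omega⟩, mem_univ _, ?_⟩
            simp only [hX, dif_pos hi, mem_insert, mem_singleton, Fin.ext_iff]
            omega
          · have him : x.1 - p < m := by have := x.isLt; omega
            refine mem_biUnion.mpr ⟨⟨x.1 - p, him⟩, mem_univ _, ?_⟩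
            have hnp : ¬ (x.1 - p < p) := by omega
            simp only [hX, dif_neg hnp, mem_singleton, Fin.ext_iff]
            omega
        have hcardU : (univ.biUnion X).card = n := by
          rw [hcov, card_univ, Fintype.card_fin]
        have hub : ∀ π : Equiv.Perm (Fin m), ∀ k, 1 ≤ k → k ≤ m →
            delta X π k ≤ (n:ℤ) - m := by
          intro π k hk1 hk2
          -- |U_k| ≤ k + p
          have hcard : (unionUpTo X π k).card ≤ k + p := by
            calc (unionUpTo X π k).card
                ≤ ∑ i ∈ univ.filter (fun i : Fin m => (i:ℕ) < k), (X (π i)).card :=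
                  card_biUnion_le
              _ ≤ ∑ i ∈ univ.filter (fun i : Fin m => (i:ℕ) < k),
                    (1 + if (π i).1 < p then 1 else 0) := by
                  apply sum_le_sum
                  intro i _
                  by_cases hi : (π i).1 < p
                  · simp only [hX, dif_pos hi, if_pos hi]
                    exact le_trans (card_insert_le _ _) (by simp)
                  · simp only [hX, dif_neg hi, if_neg hi, card_singleton]
                    omega
              _ = k + ∑ i ∈ univ.filter (fun i : Fin m => (i:ℕ) < k),
                    (if (π i).1 < p then 1 else 0) := by
                  rw [sum_add_distrib, sum_const, card_filter_lt hk2, smul_eq_mul, mul_one]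
              _ ≤ k + p := by
                  gcongr
                  rw [← card_filter]
                  refine le_trans (card_le_card_of_injOn π ?_ ?_)
                    (le_of_eq (card_filter_lt hpm))
                  · intro i hi
                    simp only [mem_coe, mem_filter, mem_univ, true_and] at hi ⊢
                    exact hi.2
                  · intro a _ b _ hab
                    exact π.injective hab
          simp only [delta]
          have h2m : (k:ℤ) + p ≥ ((unionUpTo X π k).card : ℤ) := by exact_mod_cast hcard
          have hpz : (p:ℤ) = (n:ℤ) - m := by
            have : p + m = n := by omega
            push_cast [← this]
            ring
          linarith
        have hlow : ((n:ℤ) - m) ≤ DeltaMin X := by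
          apply le_DeltaMin
          intro π
          refine le_trans ?_ (delta_le_DeltaPerm X π hm (le_refl m))
          simp only [delta, unionUpTo_of_le X π (le_refl m), hcardU]
          omega
        have hhigh : DeltaMin X ≤ (n:ℤ) - m :=
          le_trans (DeltaMin_le hm X 1) (DeltaPerm_le hm X 1 (hub 1))
        omega
    · intro X h2'
      have := DeltaMin_le_max hm X h2'
      have hmax : max 1 ((n:ℤ) - m) = (n:ℤ) - m := by
        apply max_eq_right
        have h1' : (m:ℤ) + 1 < n := by exact_mod_cast h2
        linarith
      rw [hmax] at this
      exact this
  · -- case n ≤ m+1 : value 1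
    intro h
    apply fFam_eq
    · -- example: all sets equal {0,1}
      have h0 : 0 < n := by omega
      have h1' : 1 < n := by omega
      have h01 : (⟨0, h0⟩ : Fin n) ≠ ⟨1, h1'⟩ := by
        simp [Fin.ext_iff]
      refine ⟨fun _ => {⟨0, h0⟩, (⟨1, h1'⟩ : Fin n)}, ?_, ?_⟩
      · intro i
        exact le_trans (card_insert_le _ _) (by simp)
      · set X : Fin m → Finset (Fin n) := fun _ => {⟨0, h0⟩, (⟨1, h1'⟩ : Fin n)} with hX
        have hlow : (1:ℤ) ≤ DeltaMin X := by
          apply le_DeltaMin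
          intro π
          refine le_trans ?_ (delta_le_DeltaPerm X π (le_refl 1) hm)
          have hu : unionUpTo X π 1 = {⟨0, h0⟩, (⟨1, h1'⟩ : Fin n)} := by
            apply subset_antisymm
            · intro a ha
              obtain ⟨i, -, hi⟩ := mem_biUnion.mp (unionUpTo_subset X π 1 ha)
              exact hi
            · intro a ha
              refine mem_biUnion.mpr ⟨⟨0, hm⟩, ?_, ha⟩
              simp
          simp only [delta, hu]
          rw [card_insert_of_notMem (by simpa using h01), card_singleton]
          norm_num
        have hhigh : DeltaMin X ≤ 1 := by
          have := DeltaMin_le_max hm X (fun i => le_trans (card_insert_le _ _) (by simp))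
          have hmax : max 1 ((n:ℤ) - m) = 1 := by
            apply max_eq_left
            have : (n:ℤ) ≤ (m:ℤ) + 1 := by exact_mod_cast h
            linarith
          rw [hmax] at this
          exact this
        omega
    · intro X h2'
      have := DeltaMin_le_max hm X h2'
      have hmax : max 1 ((n:ℤ) - m) = 1 := by
        apply max_eq_left
        have : (n:ℤ) ≤ (m:ℤ) + 1 := by exact_mod_cast h
        linarith
      rw [hmax] at this
      exact this
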